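/- (Theorem 1, Lorden-like criterion, single change-point.) Let T ≥ 1 and let τ be a stopping time of (F_t) with τ ≥ 1, P∞(τ < ∞) = 1, and 0 < E∞[τ] < ∞. Suppose c ≥ 0 is a constant such that for every γ ≥ 1, c·1{τ ≥ γ} ≤ P_γ(τ = γ | F_{γ−1}) holds P_γ-almost surely. Then c·E∞[τ] ≤ E∞[ℓ(X_τ)], where the right-hand side is the (possibly infinite) integral of ℓ(X_τ) under P∞. -/

import Mathlib

/-!
Context: μ0, μ1 probability measures on E, μ1 ≪ μ0, ℓ := dμ1/dμ0.  Sequence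
space Ω := ℕ → E, coordinates X_t ω = ω t.  For γ ≥ 1, `P γ` makes the
coordinates independent with X_t ~ μ1 for γ ≤ t ≤ γ+T−1 and X_t ~ μ0
otherwise; `Pinf` makes them i.i.d. ~ μ0, with expectation E∞.
F_t = σ(X_1,…,X_t), and a stopping time τ is ℕ≥1 ∪ {∞}-valued with
{τ ≤ t} ∈ F_t for all t.

STATEMENT 4 (Theorem 1, Lorden-like criterion, single change-point): if τ ≥ 1,
P∞(τ < ∞) = 1, 0 < E∞[τ] < ∞, and c ≥ 0 satisfies, for every γ ≥ 1,
c·1{τ ≥ γ} ≤ P_γ(τ = γ | F_{γ−1}) P_γ-a.s., then c·E∞[τ] ≤ E∞[ℓ(X_τ)]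
(the right-hand side being a possibly infinite integral).
-/

open MeasureTheory ProbabilityTheory
open scoped ENNReal NNReal

/-- The natural filtration `F_t = σ(X_1, …, X_t)` on the sequence space. -/
def natF (E : Type*) [MeasurableSpace E] (t : ℕ) : MeasurableSpace (ℕ → E) :=
  ⨆ i ∈ Finset.Icc 1 t, MeasurableSpace.comap (fun ω : ℕ → E => ω i) inferInstance

section Aux

variable {E : Type*} [MeasurableSpace E]

lemma natF_le (t : ℕ) : natF E t ≤ (inferInstance : MeasurableSpace (ℕ → E)) :=
  iSup_le fun i => iSup_le fun _ => (measurable_pi_apply i).comap_le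

lemma natF_mono {s t : ℕ} (h : s ≤ t) : natF E s ≤ natF E t := by
  refine iSup_le fun i => iSup_le fun hi => ?_
  refine le_iSup₂ (f := fun i (_ : i ∈ Finset.Icc 1 t) =>
    MeasurableSpace.comap (fun ω : ℕ → E => ω i) inferInstance) i ?_
  simp only [Finset.mem_Icc] at hi ⊢
  omega

lemma natF_eq (t : ℕ) : natF E t = MeasurableSpace.generateFrom
    (piiUnionInter (fun i => {s : Set (ℕ → E) |
      MeasurableSet[MeasurableSpace.comap (fun ω : ℕ → E => ω i) inferInstance] s})
      (Set.Icc 1 t)) := by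
  rw [generateFrom_piiUnionInter_measurableSet
    (fun i => MeasurableSpace.comap (fun ω : ℕ → E => ω i) inferInstance) (Set.Icc 1 t)]
  refine le_antisymm ?_ ?_
  · refine iSup_le fun i => iSup_le fun hi => ?_
    refine le_iSup₂ (f := fun i (_ : i ∈ Set.Icc 1 t) =>
      MeasurableSpace.comap (fun ω : ℕ → E => ω i) inferInstance) i ?_
    simpa [Set.mem_Icc] using Finset.mem_Icc.mp hi
  · refine iSup_le fun i => iSup_le fun hi => ?_
    refine le_iSup₂ (f := fun i (_ : i ∈ Finset.Icc 1 t) =>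
      MeasurableSpace.comap (fun ω : ℕ → E => ω i) inferInstance) i ?_
    simpa [Finset.mem_Icc] using hi

lemma eq_on_natF {t : ℕ} (P Q : Measure (ℕ → E)) [IsProbabilityMeasure P]
    [IsProbabilityMeasure Q]
    (h : ∀ s : Finset ℕ, ↑s ⊆ Set.Icc 1 t → ∀ f : ℕ → Set E,
      (∀ i ∈ s, MeasurableSet (f i)) →
      P (⋂ i ∈ s, (fun ω : ℕ → E => ω i) ⁻¹' f i)
        = Q (⋂ i ∈ s, (fun ω : ℕ → E => ω i) ⁻¹' f i))
    {A : Set (ℕ → E)} (hA : MeasurableSet[natF E t] A) : P A = Q A := by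
  have hle := natF_le (E := E) t
  refine MeasurableSpace.induction_on_inter (m := natF E t) (C := fun s _ => P s = Q s) (natF_eq t)
    (isPiSystem_piiUnionInter _ (fun i => @MeasurableSpace.isPiSystem_measurableSet _ (MeasurableSpace.comap (fun ω : ℕ → E => ω i) inferInstance)) _)
    (by show P ∅ = Q ∅; rw [measure_empty, measure_empty]) ?_ ?_ ?_ _ hA
  · rintro A ⟨s, hsS, f, hf, rfl⟩
    have hex : ∀ i, ∃ g : Set E, MeasurableSet g ∧
        (i ∈ s → (fun ω : ℕ → E => ω i) ⁻¹' g = f i) := by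
      intro i
      by_cases hi : i ∈ s
      · obtain ⟨g, hg, hg2⟩ := MeasurableSpace.measurableSet_comap.mp (hf i hi)
        exact ⟨g, hg, fun _ => hg2⟩
      · exact ⟨Set.univ, MeasurableSet.univ, fun hmem => absurd hmem hi⟩
    choose g hg1 hg2 using hex
    show P _ = Q _
    have hEq : (⋂ i ∈ s, f i) = ⋂ i ∈ s, (fun ω : ℕ → E => ω i) ⁻¹' g i :=
      Set.iInter₂_congr fun i hi => (hg2 i hi).symm
    rw [hEq]
    exact h s hsS g fun i _ => hg1 i
  · intro A hAm hPQ
    show P _ = Q _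
    rw [measure_compl (hle _ hAm) (measure_ne_top _ _),
      measure_compl (hle _ hAm) (measure_ne_top _ _), measure_univ, measure_univ, hPQ]
  · intro f hdisj hmeas hPQ
    show P _ = Q _
    rw [measure_iUnion hdisj fun i => hle _ (hmeas i),
      measure_iUnion hdisj fun i => hle _ (hmeas i)]
    exact tsum_congr hPQ

lemma meas_biInter_eq_prod (μ : Measure (ℕ → E))
    (hind : iIndepFun (fun t (ω : ℕ → E) => ω t) μ)
    (s : Finset ℕ) (f : ℕ → Set E) (hf : ∀ i ∈ s, MeasurableSet (f i)) :
    μ (⋂ i ∈ s, (fun ω : ℕ → E => ω i) ⁻¹' f i)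
      = ∏ i ∈ s, μ.map (fun ω : ℕ → E => ω i) (f i) := by
  rw [hind.meas_biInter (fun i hi => ⟨f i, hf i hi, rfl⟩)]
  exact Finset.prod_congr rfl fun i hi =>
    (Measure.map_apply (measurable_pi_apply i) (hf i hi)).symm

lemma withDensity_biInter (μ0 : Measure E) (Pinf : Measure (ℕ → E))
    (hind : iIndepFun (fun t (ω : ℕ → E) => ω t) Pinf)
    (hmarg : ∀ t : ℕ, Pinf.map (fun ω => ω t) = μ0)
    (γ : ℕ) (ℓ : E → ℝ≥0∞) (hℓ : Measurable ℓ)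
    (s' : Finset ℕ) (hγs' : γ ∉ s') (f : ℕ → Set E) (hf : ∀ i ∈ s', MeasurableSet (f i))
    (A' : Set E) (hA' : MeasurableSet A') :
    Pinf.withDensity (fun ω => ℓ (ω γ))
      ((⋂ i ∈ s', (fun ω : ℕ → E => ω i) ⁻¹' f i) ∩ (fun ω : ℕ → E => ω γ) ⁻¹' A')
      = Pinf (⋂ i ∈ s', (fun ω : ℕ → E => ω i) ⁻¹' f i) * ∫⁻ x in A', ℓ x ∂μ0 := by
  set B := ⋂ i ∈ s', (fun ω : ℕ → E => ω i) ⁻¹' f i with hBdef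
  have hB : MeasurableSet B :=
    MeasurableSet.biInter s'.countable_toSet fun i hi => measurable_pi_apply i (hf i hi)
  have hC : MeasurableSet ((fun ω : ℕ → E => ω γ) ⁻¹' A') := measurable_pi_apply γ hA'
  have key : (Pinf.restrict B).map (fun ω : ℕ → E => ω γ) = Pinf B • μ0 := by
    ext A hA
    rw [Measure.map_apply (measurable_pi_apply γ) hA,
      Measure.restrict_apply (measurable_pi_apply γ hA), Measure.smul_apply, smul_eq_mul]
    have hsplit : (fun ω : ℕ → E => ω γ) ⁻¹' A ∩ B
        = ⋂ i ∈ insert γ s', (fun ω : ℕ → E => ω i) ⁻¹' Function.update f γ A i := by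
      rw [Finset.set_biInter_insert]
      congr 1
      · rw [Function.update_self]
      · exact Set.iInter₂_congr fun i hi => by
          rw [Function.update_of_ne (by rintro rfl; exact hγs' hi)]
    have hfm : ∀ i ∈ insert γ s', MeasurableSet (Function.update f γ A i) := by
      intro i hi
      rcases Finset.mem_insert.mp hi with rfl | hi'
      · rwa [Function.update_self]
      · rw [Function.update_of_ne (by rintro rfl; exact hγs' hi')]
        exact hf i hi'
    rw [hsplit, meas_biInter_eq_prod Pinf hind _ _ hfm, Finset.prod_insert hγs',
      hBdef, meas_biInter_eq_prod Pinf hind _ _ hf]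
    have h1 : Pinf.map (fun ω : ℕ → E => ω γ) (Function.update f γ A γ) = μ0 A := by
      rw [Function.update_self, hmarg]
    rw [h1, mul_comm]
    congr 1
    exact Finset.prod_congr rfl fun i hi => by
      rw [Function.update_of_ne (by rintro rfl; exact hγs' hi)]
  calc Pinf.withDensity (fun ω => ℓ (ω γ)) (B ∩ (fun ω : ℕ → E => ω γ) ⁻¹' A')
      = ∫⁻ ω in B ∩ (fun ω : ℕ → E => ω γ) ⁻¹' A', ℓ (ω γ) ∂Pinf :=
        withDensity_apply _ (hB.inter hC)
    _ = ∫⁻ ω in (fun ω : ℕ → E => ω γ) ⁻¹' A', ℓ (ω γ) ∂(Pinf.restrict B) := by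
        rw [Measure.restrict_restrict hC, Set.inter_comm]
    _ = ∫⁻ ω, ((fun ω : ℕ → E => ω γ) ⁻¹' A').indicator (fun ω => ℓ (ω γ)) ω
          ∂(Pinf.restrict B) := (lintegral_indicator hC _).symm
    _ = ∫⁻ ω, (A'.indicator ℓ) (ω γ) ∂(Pinf.restrict B) := by
        refine lintegral_congr fun ω => ?_
        by_cases hω : ω γ ∈ A' <;>
          simp [Set.indicator_apply, Set.mem_preimage, hω]
    _ = ∫⁻ x, A'.indicator ℓ x ∂((Pinf.restrict B).map (fun ω : ℕ → E => ω γ)) :=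
        (lintegral_map (hℓ.indicator hA') (measurable_pi_apply γ)).symm
    _ = Pinf B * ∫⁻ x in A', ℓ x ∂μ0 := by
        rw [key, lintegral_smul_measure, lintegral_indicator hA' _, smul_eq_mul]

end Aux

theorem stmt_4
    {E : Type*} [MeasurableSpace E]
    (μ0 μ1 : Measure E) [IsProbabilityMeasure μ0] [IsProbabilityMeasure μ1]
    (hac : μ1 ≪ μ0)
    (T : ℕ) (hT : 1 ≤ T)
    (Pinf : Measure (ℕ → E)) [IsProbabilityMeasure Pinf]
    (hPinf_indep :
      iIndepFun
        (fun t (ω : ℕ → E) => ω t) Pinf)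
    (hPinf_marg : ∀ t : ℕ, Pinf.map (fun ω => ω t) = μ0)
    (P : ℕ → Measure (ℕ → E))
    (hP_prob : ∀ γ, 1 ≤ γ → IsProbabilityMeasure (P γ))
    (hP_indep : ∀ γ, 1 ≤ γ →
      iIndepFun
        (fun t (ω : ℕ → E) => ω t) (P γ))
    (hP_marg : ∀ γ, 1 ≤ γ → ∀ t : ℕ,
      (P γ).map (fun ω => ω t) = if γ ≤ t ∧ t < γ + T then μ1 else μ0)
    (τ : (ℕ → E) → ℕ∞)
    (hτ1 : ∀ ω, 1 ≤ τ ω)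
    (hτ_stop : ∀ t : ℕ, MeasurableSet[natF E t] {ω | τ ω ≤ (t : ℕ∞)})
    (hτ_fin : Pinf {ω | τ ω ≠ ⊤} = 1)
    (hτ_pos : 0 < ∫⁻ ω, (τ ω : ℝ≥0∞) ∂Pinf)
    (hτ_int : ∫⁻ ω, (τ ω : ℝ≥0∞) ∂Pinf < ⊤)
    (c : ℝ) (hc0 : 0 ≤ c)
    (hc : ∀ γ : ℕ, 1 ≤ γ →
      ∀ᵐ ω ∂(P γ),
        c * ({ω' | (γ : ℕ∞) ≤ τ ω'}.indicator (fun _ => (1 : ℝ)) ω)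
          ≤ ((P γ)[{ω' | τ ω' = (γ : ℕ∞)}.indicator (fun _ => (1 : ℝ)) |
              natF E (γ - 1)]) ω) :
    ENNReal.ofReal c * ∫⁻ ω, (τ ω : ℝ≥0∞) ∂Pinf
      ≤ ∫⁻ ω, μ1.rnDeriv μ0 (ω (τ ω).toNat) ∂Pinf := by
  classical
  set ℓ : E → ℝ≥0∞ := μ1.rnDeriv μ0 with hℓdef
  have hℓm : Measurable ℓ := Measure.measurable_rnDeriv μ1 μ0
  -- measurability of the relevant sets
  have mle : ∀ t : ℕ, MeasurableSet {ω : ℕ → E | τ ω ≤ (t : ℕ∞)} :=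
    fun t => natF_le t _ (hτ_stop t)
  have hge : ∀ γ : ℕ, 1 ≤ γ →
      {ω : ℕ → E | (γ : ℕ∞) ≤ τ ω} = {ω : ℕ → E | τ ω ≤ ((γ - 1 : ℕ) : ℕ∞)}ᶜ := by
    intro γ hγ
    ext ω
    simp only [Set.mem_setOf_eq, Set.mem_compl_iff, not_le]
    have hcast : ((γ - 1 : ℕ) : ℕ∞) + 1 = (γ : ℕ∞) := by
      norm_cast
      omega
    rw [← hcast]
    exact ENat.add_one_le_iff (ENat.coe_ne_top _)
  have mge : ∀ γ : ℕ, 1 ≤ γ → MeasurableSet {ω : ℕ → E | (γ : ℕ∞) ≤ τ ω} := by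
    intro γ hγ
    rw [hge γ hγ]
    exact (mle _).compl
  have heqτ : ∀ γ : ℕ, {ω : ℕ → E | τ ω = (γ : ℕ∞)}
      = {ω : ℕ → E | τ ω ≤ (γ : ℕ∞)} ∩ {ω : ℕ → E | (γ : ℕ∞) ≤ τ ω} := by
    intro γ
    ext ω
    simp only [Set.mem_setOf_eq, Set.mem_inter_iff, le_antisymm_iff]
  have meq : ∀ γ : ℕ, 1 ≤ γ → MeasurableSet {ω : ℕ → E | τ ω = (γ : ℕ∞)} := by
    intro γ hγ
    rw [heqτ γ]
    exact (mle γ).inter (mge γ hγ)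
  have meqF : ∀ γ : ℕ, 1 ≤ γ → MeasurableSet[natF E γ] {ω : ℕ → E | τ ω = (γ : ℕ∞)} := by
    intro γ hγ
    rw [heqτ γ, hge γ hγ]
    exact MeasurableSet.inter (hτ_stop γ)
      (MeasurableSet.compl ((natF_mono (Nat.sub_le γ 1)) _ (hτ_stop (γ - 1))))
  -- key per-γ inequality
  have key : ∀ γ : ℕ, 1 ≤ γ →
      ENNReal.ofReal c * Pinf {ω : ℕ → E | (γ : ℕ∞) ≤ τ ω}
        ≤ ∫⁻ ω in {ω : ℕ → E | τ ω = (γ : ℕ∞)}, ℓ (ω γ) ∂Pinf := by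
    intro γ hγ
    haveI := hP_prob γ hγ
    have hWuniv : Pinf.withDensity (fun ω => ℓ (ω γ)) Set.univ = 1 := by
      rw [withDensity_apply _ MeasurableSet.univ, Measure.restrict_univ]
      calc ∫⁻ ω, ℓ (ω γ) ∂Pinf = ∫⁻ x, ℓ x ∂(Pinf.map (fun ω : ℕ → E => ω γ)) :=
            (lintegral_map hℓm (measurable_pi_apply γ)).symm
        _ = 1 := by rw [hPinf_marg γ, hℓdef, Measure.lintegral_rnDeriv hac, measure_univ]
    haveI : IsProbabilityMeasure (Pinf.withDensity (fun ω => ℓ (ω γ))) := ⟨hWuniv⟩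
    -- agreement of `P γ` and `Pinf` on `F (γ-1)`
    have hA1 : P γ {ω : ℕ → E | (γ : ℕ∞) ≤ τ ω} = Pinf {ω : ℕ → E | (γ : ℕ∞) ≤ τ ω} := by
      refine eq_on_natF (P γ) Pinf ?_ (t := γ - 1)
        (by rw [hge γ hγ]; exact MeasurableSet.compl (hτ_stop (γ - 1)))
      intro s hs f hf
      rw [meas_biInter_eq_prod _ (hP_indep γ hγ) s f hf,
        meas_biInter_eq_prod _ hPinf_indep s f hf]
      refine Finset.prod_congr rfl fun i hi => ?_
      have hi' := Set.mem_Icc.mp (hs hi)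
      rw [hP_marg γ hγ i, hPinf_marg i, if_neg]
      rintro ⟨h1, -⟩
      omega
    -- agreement of `P γ` and the `withDensity` measure on `F γ`
    have hA2 : P γ {ω : ℕ → E | τ ω = (γ : ℕ∞)}
        = Pinf.withDensity (fun ω => ℓ (ω γ)) {ω : ℕ → E | τ ω = (γ : ℕ∞)} := by
      refine eq_on_natF (P γ) _ ?_ (t := γ) (meqF γ hγ)
      intro s hs f hf
      have hL : P γ (⋂ i ∈ s, (fun ω : ℕ → E => ω i) ⁻¹' f i)
          = ∏ i ∈ s, (if γ ≤ i ∧ i < γ + T then μ1 else μ0) (f i) := by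
        rw [meas_biInter_eq_prod _ (hP_indep γ hγ) s f hf]
        exact Finset.prod_congr rfl fun i hi => by rw [hP_marg γ hγ i]
      by_cases hγs : γ ∈ s
      · have hf' : ∀ i ∈ s.erase γ, MeasurableSet (f i) :=
          fun i hi => hf i (Finset.mem_of_mem_erase hi)
        have hsplit : (⋂ i ∈ s, (fun ω : ℕ → E => ω i) ⁻¹' f i)
            = (⋂ i ∈ s.erase γ, (fun ω : ℕ → E => ω i) ⁻¹' f i)
              ∩ (fun ω : ℕ → E => ω γ) ⁻¹' f γ := by
          conv_lhs => rw [← Finset.insert_erase hγs]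
          rw [Finset.set_biInter_insert, Set.inter_comm]
        have hPB : Pinf (⋂ i ∈ s.erase γ, (fun ω : ℕ → E => ω i) ⁻¹' f i)
            = ∏ i ∈ s.erase γ, μ0 (f i) := by
          rw [meas_biInter_eq_prod _ hPinf_indep _ f hf']
          exact Finset.prod_congr rfl fun i hi => by rw [hPinf_marg i]
        have hR : Pinf.withDensity (fun ω => ℓ (ω γ)) (⋂ i ∈ s, (fun ω : ℕ → E => ω i) ⁻¹' f i)
            = Pinf (⋂ i ∈ s.erase γ, (fun ω : ℕ → E => ω i) ⁻¹' f i)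
              * ∫⁻ x in f γ, ℓ x ∂μ0 := by
          rw [hsplit]
          exact withDensity_biInter μ0 Pinf hPinf_indep hPinf_marg γ ℓ hℓm _
            (Finset.notMem_erase γ s) f hf' _ (hf γ hγs)
        rw [hL, hR, hPB, hℓdef, Measure.setLIntegral_rnDeriv' hac (hf γ hγs)]
        conv_lhs => rw [← Finset.insert_erase hγs]
        rw [Finset.prod_insert (Finset.notMem_erase γ s), if_pos ⟨le_refl γ, by omega⟩,
          mul_comm]
        congr 1
        refine Finset.prod_congr rfl fun i hi => ?_
        have hine := Finset.ne_of_mem_erase hi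
        have hIcc := Set.mem_Icc.mp (hs (Finset.mem_of_mem_erase hi))
        rw [if_neg]
        rintro ⟨h1, -⟩
        exact hine (le_antisymm hIcc.2 h1)
      · have hsplit : (⋂ i ∈ s, (fun ω : ℕ → E => ω i) ⁻¹' f i)
            = (⋂ i ∈ s, (fun ω : ℕ → E => ω i) ⁻¹' f i)
              ∩ (fun ω : ℕ → E => ω γ) ⁻¹' Set.univ := by
          rw [Set.preimage_univ, Set.inter_univ]
        have hR : Pinf.withDensity (fun ω => ℓ (ω γ)) (⋂ i ∈ s, (fun ω : ℕ → E => ω i) ⁻¹' f i)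
            = Pinf (⋂ i ∈ s, (fun ω : ℕ → E => ω i) ⁻¹' f i) * ∫⁻ x in Set.univ, ℓ x ∂μ0 := by
          conv_lhs => rw [hsplit]
          exact withDensity_biInter μ0 Pinf hPinf_indep hPinf_marg γ ℓ hℓm s hγs f hf _
            MeasurableSet.univ
        rw [hL, hR, hℓdef, Measure.setLIntegral_rnDeriv' hac MeasurableSet.univ, measure_univ,
          mul_one, meas_biInter_eq_prod _ hPinf_indep s f hf]
        refine Finset.prod_congr rfl fun i hi => ?_
        have hIcc := Set.mem_Icc.mp (hs hi)
        rw [hPinf_marg i, if_neg]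
        rintro ⟨h1, -⟩
        exact hγs (le_antisymm hIcc.2 h1 ▸ hi)
    -- integrate the conditional-expectation hypothesis
    have hm : natF E (γ - 1) ≤ (inferInstance : MeasurableSpace (ℕ → E)) := natF_le (γ - 1)
    have hintL : Integrable
        (fun ω => c * ({ω' : ℕ → E | (γ : ℕ∞) ≤ τ ω'}.indicator (fun _ => (1 : ℝ)) ω))
        (P γ) := ((integrable_const (1 : ℝ)).indicator (mge γ hγ)).const_mul c
    have hmono := integral_mono_ae hintL integrable_condExp (hc γ hγ)
    rw [integral_condExp hm] at hmono
    rw [integral_const_mul, integral_indicator_const (1 : ℝ) (mge γ hγ),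
      integral_indicator_const (1 : ℝ) (meq γ hγ), smul_eq_mul, smul_eq_mul, mul_one, mul_one,
      measureReal_def, measureReal_def, hA1, hA2] at hmono
    have hWne : Pinf.withDensity (fun ω => ℓ (ω γ)) {ω : ℕ → E | τ ω = (γ : ℕ∞)} ≠ ⊤ :=
      measure_ne_top _ _
    calc ENNReal.ofReal c * Pinf {ω : ℕ → E | (γ : ℕ∞) ≤ τ ω}
        = ENNReal.ofReal (c * (Pinf {ω : ℕ → E | (γ : ℕ∞) ≤ τ ω}).toReal) := by
          rw [ENNReal.ofReal_mul hc0, ENNReal.ofReal_toReal (measure_ne_top _ _)]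
      _ ≤ ENNReal.ofReal
            ((Pinf.withDensity (fun ω => ℓ (ω γ)) {ω : ℕ → E | τ ω = (γ : ℕ∞)}).toReal) :=
          ENNReal.ofReal_le_ofReal hmono
      _ = Pinf.withDensity (fun ω => ℓ (ω γ)) {ω : ℕ → E | τ ω = (γ : ℕ∞)} :=
          ENNReal.ofReal_toReal hWne
      _ = ∫⁻ ω in {ω : ℕ → E | τ ω = (γ : ℕ∞)}, ℓ (ω γ) ∂Pinf :=
          withDensity_apply _ (meq γ hγ)
  -- the tail-sum formula for the expectation of τ
  have hpt : ∀ ω : ℕ → E, ((τ ω : ℕ∞) : ℝ≥0∞)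
      = ∑' n : ℕ, {ω' : ℕ → E | ((n + 1 : ℕ) : ℕ∞) ≤ τ ω'}.indicator (fun _ => (1 : ℝ≥0∞)) ω := by
    intro ω
    by_cases hω : τ ω = ⊤
    · rw [hω, ENat.toENNReal_top]
      have hone : ∀ n : ℕ,
          {ω' : ℕ → E | ((n + 1 : ℕ) : ℕ∞) ≤ τ ω'}.indicator (fun _ => (1 : ℝ≥0∞)) ω = 1 := by
        intro n
        rw [Set.indicator_of_mem]
        show ((n + 1 : ℕ) : ℕ∞) ≤ τ ω
        rw [hω]; exact le_top
      rw [tsum_congr hone]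
      exact (ENNReal.tsum_const_eq_top_of_ne_zero one_ne_zero).symm
    · obtain ⟨k, hk⟩ : ∃ k : ℕ, τ ω = (k : ℕ∞) := ⟨(τ ω).toNat, (ENat.coe_toNat hω).symm⟩
      rw [hk, ENat.toENNReal_coe]
      have hterm : ∀ n : ℕ,
          {ω' : ℕ → E | ((n + 1 : ℕ) : ℕ∞) ≤ τ ω'}.indicator (fun _ => (1 : ℝ≥0∞)) ω
            = if n ∈ Finset.range k then 1 else 0 := by
        intro n
        by_cases hn : n < k
        · rw [Set.indicator_of_mem, if_pos (Finset.mem_range.mpr hn)]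
          show ((n + 1 : ℕ) : ℕ∞) ≤ τ ω
          rw [hk]
          exact_mod_cast hn
        · rw [Set.indicator_of_notMem, if_neg fun hmem => hn (Finset.mem_range.mp hmem)]
          show ¬ ((n + 1 : ℕ) : ℕ∞) ≤ τ ω
          rw [hk]
          exact_mod_cast hn
      rw [tsum_congr hterm, tsum_eq_sum (s := Finset.range k) (fun n hn => if_neg hn)]
      have hrw : ∑ n ∈ Finset.range k, (if n ∈ Finset.range k then (1 : ℝ≥0∞) else 0)
          = ∑ _n ∈ Finset.range k, (1 : ℝ≥0∞) :=
        Finset.sum_congr rfl fun n hn => if_pos hn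
      rw [hrw, Finset.sum_const, Finset.card_range, nsmul_eq_mul, mul_one]
  have tailsum : ∫⁻ ω, (τ ω : ℝ≥0∞) ∂Pinf
      = ∑' n : ℕ, Pinf {ω : ℕ → E | ((n + 1 : ℕ) : ℕ∞) ≤ τ ω} := by
    rw [lintegral_congr hpt,
      lintegral_tsum fun n => (measurable_const.indicator (mge (n + 1) (by omega))).aemeasurable]
    refine tsum_congr fun n => ?_
    rw [lintegral_indicator (mge (n + 1) (by omega)) _, setLIntegral_one]
  -- disjointness of the level sets
  have hdisj : Pairwise (Function.onFun Disjoint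
      fun n : ℕ => {ω : ℕ → E | τ ω = ((n + 1 : ℕ) : ℕ∞)}) := by
    intro m n hmn
    simp only [Function.onFun, Set.disjoint_left, Set.mem_setOf_eq]
    intro ω h1 h2
    rw [h1] at h2
    have h3 : m + 1 = n + 1 := by exact_mod_cast h2
    exact hmn (by omega)
  -- put everything together
  calc ENNReal.ofReal c * ∫⁻ ω, (τ ω : ℝ≥0∞) ∂Pinf
      = ∑' n : ℕ, ENNReal.ofReal c * Pinf {ω : ℕ → E | ((n + 1 : ℕ) : ℕ∞) ≤ τ ω} := by
        rw [tailsum, ENNReal.tsum_mul_left]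
    _ ≤ ∑' n : ℕ, ∫⁻ ω in {ω : ℕ → E | τ ω = ((n + 1 : ℕ) : ℕ∞)}, ℓ (ω (n + 1)) ∂Pinf :=
        ENNReal.tsum_le_tsum fun n => key (n + 1) (by omega)
    _ = ∑' n : ℕ, ∫⁻ ω in {ω : ℕ → E | τ ω = ((n + 1 : ℕ) : ℕ∞)}, ℓ (ω (τ ω).toNat) ∂Pinf := by
        refine tsum_congr fun n => setLIntegral_congr_fun (meq (n + 1) (by omega)) ?_
        intro ω hω
        beta_reduce
        have hτω : τ ω = ((n + 1 : ℕ) : ℕ∞) := hω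
        rw [hτω, ENat.toNat_coe]
    _ = ∫⁻ ω in ⋃ n : ℕ, {ω : ℕ → E | τ ω = ((n + 1 : ℕ) : ℕ∞)}, ℓ (ω (τ ω).toNat) ∂Pinf :=
        (lintegral_iUnion (fun n => meq (n + 1) (by omega)) hdisj _).symm
    _ ≤ ∫⁻ ω, ℓ (ω (τ ω).toNat) ∂Pinf := setLIntegral_le_lintegral _ _
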